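/- There is an absolute constant b > 0 such that for all sufficiently large t and every real K with 1 ≤ K ≤ log log t, setting σ₀ = 1 + K/((log t)^{2/3}(log log t)^{1/3}), one has −Re(ζ'(σ₀+it)/ζ(σ₀+it)) ≤ b·(log log t)^{1/3}(log t)^{2/3}. -/

import Mathlib

open Complex ArithmeticFunction LSeries
open scoped LSeries.notation

namespace NegReZetaAux

/-- An L-series with real coefficients at a real point `u` equals the coercion of the
corresponding real series. -/
lemma lseries_real (f : ℕ → ℝ) (u : ℝ)
    (hsum : LSeriesSummable (fun n ↦ ((f n : ℝ) : ℂ)) u) :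
    LSeries (fun n ↦ ((f n : ℝ) : ℂ)) u
      = ((∑' n : ℕ, f (n + 1) / ((n : ℝ) + 1) ^ u : ℝ) : ℂ) := by
  rw [LSeries, Summable.tsum_eq_zero_add hsum, LSeries.term_zero, zero_add, Complex.ofReal_tsum]
  refine tsum_congr fun n ↦ ?_
  rw [LSeries.term_of_ne_zero (Nat.succ_ne_zero n)]
  rw [show ((n + 1 : ℕ) : ℂ) = (((n : ℝ) + 1 : ℝ) : ℂ) by push_cast; ring,
    ← Complex.ofReal_cpow (by positivity), ← Complex.ofReal_div]

lemma summable_Z {p : ℝ} (hp : 1 < p) : Summable (fun n : ℕ ↦ 1 / ((n : ℝ) + 1) ^ p) := by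
  have := (summable_nat_add_iff 1).mpr (Real.summable_one_div_nat_rpow.mpr hp)
  refine this.congr fun n ↦ ?_
  push_cast
  ring_nf

lemma term_tsum_le {u : ℝ} (h1 : 1 < u) :
    ZetaAsymptotics.term_tsum u ≤ 1 - Real.eulerMascheroniConstant := by
  have hsum1 := ZetaAsymptotics.term_tsum_one.summable
  have hle : ∀ n : ℕ, ZetaAsymptotics.term (n + 1) u ≤ ZetaAsymptotics.term (n + 1) 1 := by
    intro n
    unfold ZetaAsymptotics.term
    refine intervalIntegral.integral_mono_on (by linarith)
      (ZetaAsymptotics.term_welldef n.succ_pos (by linarith))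
      (ZetaAsymptotics.term_welldef n.succ_pos one_pos) fun x hx ↦ ?_
    have hx1 : (1 : ℝ) ≤ x := le_trans (by push_cast; linarith) hx.1
    have hxn : ((n + 1 : ℕ) : ℝ) ≤ x := hx.1
    exact div_le_div_of_nonneg_left (by linarith) (by positivity)
      (Real.rpow_le_rpow_of_exponent_le hx1 (by linarith))
  have hsumu : Summable fun n : ℕ ↦ ZetaAsymptotics.term (n + 1) u :=
    Summable.of_nonneg_of_le (fun n ↦ ZetaAsymptotics.term_nonneg _ _) hle hsum1
  calc ZetaAsymptotics.term_tsum u ≤ ∑' n : ℕ, ZetaAsymptotics.term (n + 1) 1 :=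
        Summable.tsum_le_tsum hle hsumu hsum1
    _ = 1 - Real.eulerMascheroniConstant := ZetaAsymptotics.term_tsum_one.tsum_eq

lemma Z_le {u : ℝ} (h1 : 1 < u) :
    ∑' n : ℕ, 1 / ((n : ℝ) + 1) ^ u ≤ 1 + 1 / (u - 1) := by
  have h := ZetaAsymptotics.zeta_limit_aux1 h1
  have hT : 0 ≤ ZetaAsymptotics.termTSum u :=
    tsum_nonneg fun n ↦ ZetaAsymptotics.term_nonneg _ _
  nlinarith [h, hT]

lemma le_Z {u : ℝ} (h1 : 1 < u) (h2 : u ≤ 3 / 2) :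
    1 / (u - 1) ≤ ∑' n : ℕ, 1 / ((n : ℝ) + 1) ^ u := by
  have h := ZetaAsymptotics.zeta_limit_aux1 h1
  have hT : ZetaAsymptotics.termTSum u ≤ 1 - Real.eulerMascheroniConstant := term_tsum_le h1
  have hγ : 1 / 2 < Real.eulerMascheroniConstant := Real.one_half_lt_eulerMascheroniConstant
  have hT0 : 0 ≤ ZetaAsymptotics.termTSum u :=
    tsum_nonneg fun n ↦ ZetaAsymptotics.term_nonneg _ _
  nlinarith

end NegReZetaAux

namespace NegReZetaAux

lemma log_term_le {u : ℝ} (h1 : 1 < u) (n : ℕ) :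
    Real.log ((n : ℝ) + 1) / ((n : ℝ) + 1) ^ u
      ≤ (2 / (u - 1)) * (1 / ((n : ℝ) + 1) ^ ((u + 1) / 2)) := by
  set x : ℝ := (n : ℝ) + 1 with hxdef
  have hx0 : (0 : ℝ) < x := by positivity
  have hδ : (0 : ℝ) < u - 1 := by linarith
  have h2 : Real.log (x ^ ((u - 1) / 2)) ≤ x ^ ((u - 1) / 2) - 1 :=
    Real.log_le_sub_one_of_pos (by positivity)
  rw [Real.log_rpow hx0] at h2
  have hlog : Real.log x ≤ 2 / (u - 1) * x ^ ((u - 1) / 2) := by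
    rw [div_mul_eq_mul_div, le_div_iff₀ hδ]
    nlinarith
  have hpow : x ^ ((u - 1) / 2) / x ^ u = 1 / x ^ ((u + 1) / 2) := by
    rw [← Real.rpow_sub hx0, show (u - 1) / 2 - u = -((u + 1) / 2) by ring,
      Real.rpow_neg hx0.le, one_div]
  calc Real.log x / x ^ u ≤ 2 / (u - 1) * x ^ ((u - 1) / 2) / x ^ u := by gcongr
    _ = 2 / (u - 1) * (x ^ ((u - 1) / 2) / x ^ u) := by rw [mul_div_assoc]
    _ = 2 / (u - 1) * (1 / x ^ ((u + 1) / 2)) := by rw [hpow]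

lemma summable_D {u : ℝ} (h1 : 1 < u) :
    Summable (fun n : ℕ ↦ Real.log ((n : ℝ) + 1) / ((n : ℝ) + 1) ^ u) := by
  have hv : 1 < (u + 1) / 2 := by linarith
  have hlog0 : ∀ n : ℕ, (0:ℝ) ≤ Real.log ((n : ℝ) + 1) / ((n : ℝ) + 1) ^ u := by
    intro n
    have : (0:ℝ) ≤ Real.log ((n : ℝ) + 1) := Real.log_nonneg (by simp)
    positivity
  exact Summable.of_nonneg_of_le hlog0 (log_term_le h1) ((summable_Z hv).mul_left _)

lemma D_le {u : ℝ} (h1 : 1 < u) :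
    ∑' n : ℕ, Real.log ((n : ℝ) + 1) / ((n : ℝ) + 1) ^ u
      ≤ (2 / (u - 1)) * (1 + 1 / ((u + 1) / 2 - 1)) := by
  have hv : 1 < (u + 1) / 2 := by linarith
  calc ∑' n : ℕ, Real.log ((n : ℝ) + 1) / ((n : ℝ) + 1) ^ u
      ≤ ∑' n : ℕ, (2 / (u - 1)) * (1 / ((n : ℝ) + 1) ^ ((u + 1) / 2)) :=
        Summable.tsum_le_tsum (log_term_le h1) (summable_D h1) ((summable_Z hv).mul_left _)
    _ = (2 / (u - 1)) * ∑' n : ℕ, 1 / ((n : ℝ) + 1) ^ ((u + 1) / 2) := tsum_mul_left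
    _ ≤ (2 / (u - 1)) * (1 + 1 / ((u + 1) / 2 - 1)) := by
        have := Z_le hv
        have h5 : (0:ℝ) < u - 1 := by linarith
        have h4 : (0 : ℝ) ≤ 2 / (u - 1) := by positivity
        exact mul_le_mul_of_nonneg_left this h4

end NegReZetaAux

namespace NegReZetaAux

lemma A_le {u : ℝ} (h1 : 1 < u) (h2 : u ≤ 3 / 2) :
    ∑' n : ℕ, (Λ (n + 1) : ℝ) / ((n : ℝ) + 1) ^ u ≤ 12 / (u - 1) := by
  have hre : (1 : ℝ) < ((u : ℂ)).re := by simpa using h1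
  have hΛ : LSeriesSummable (fun n ↦ ((Λ n : ℝ) : ℂ)) u := LSeriesSummable_vonMangoldt hre
  have h1s : LSeriesSummable 1 (u : ℂ) := LSeriesSummable_one_iff.mpr hre
  have hlogsum : LSeriesSummable (fun n : ℕ ↦ ((Real.log n : ℝ) : ℂ)) u := by
    have h0 := LSeriesSummable_logMul_of_lt_re (f := 1) (s := (u : ℂ))
      (by rw [LSeries.abscissaOfAbsConv_one]; exact_mod_cast hre)
    refine (LSeriesSummable_congr (u : ℂ) fun {n} hn ↦ ?_).mp h0
    simp only [LSeries.logMul, Pi.one_apply, mul_one]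
    rw [Complex.natCast_log]
  have hconv : LSeries (fun n : ℕ ↦ ((Real.log n : ℝ) : ℂ)) u
      = LSeries (fun n ↦ ((Λ n : ℝ) : ℂ)) u * LSeries 1 u := by
    rw [← LSeries_convolution' hΛ h1s]
    refine LSeries_congr (fun {n} hn ↦ ?_) _
    rw [show ((fun n ↦ ((Λ n : ℝ) : ℂ)) ⍟ 1) = fun n : ℕ ↦ Complex.log n from
      convolution_vonMangoldt_const_one]
    simpa using Complex.natCast_log.symm
  have h1eq : LSeries 1 (u : ℂ) = LSeries (fun _ : ℕ ↦ (((1 : ℝ)) : ℂ)) u :=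
    LSeries_congr (fun {n} _ ↦ by norm_num) _
  have h1s' : LSeriesSummable (fun _ : ℕ ↦ (((1 : ℝ)) : ℂ)) u := by
    refine (LSeriesSummable_congr (u : ℂ) fun {n} hn ↦ ?_).mp h1s
    norm_num
  have hA := lseries_real (fun n ↦ (Λ n : ℝ)) u hΛ
  have hZr := lseries_real (fun _ ↦ (1 : ℝ)) u h1s'
  have hDr := lseries_real (fun n ↦ Real.log n) u hlogsum
  rw [hA, h1eq, hZr, hDr, ← Complex.ofReal_mul] at hconv
  have hreal := Complex.ofReal_injective hconv
  -- identify the three real sums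
  have hDcast : (∑' n : ℕ, Real.log ((n + 1 : ℕ) : ℝ) / ((n : ℝ) + 1) ^ u)
      = ∑' n : ℕ, Real.log ((n : ℝ) + 1) / ((n : ℝ) + 1) ^ u := by
    refine tsum_congr fun n ↦ ?_
    push_cast
    ring_nf
  rw [hDcast] at hreal
  have hδ : (0 : ℝ) < u - 1 := by linarith
  have hZlow : 1 / (u - 1) ≤ ∑' n : ℕ, 1 / ((n : ℝ) + 1) ^ u := le_Z h1 h2
  have hDhigh : (∑' n : ℕ, Real.log ((n : ℝ) + 1) / ((n : ℝ) + 1) ^ u)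
      ≤ (2 / (u - 1)) * (1 + 1 / ((u + 1) / 2 - 1)) := D_le h1
  have hA0 : (0 : ℝ) ≤ ∑' n : ℕ, (Λ (n + 1) : ℝ) / ((n : ℝ) + 1) ^ u := by
    refine tsum_nonneg fun n ↦ ?_
    have := ArithmeticFunction.vonMangoldt_nonneg (n := n + 1)
    positivity
  set A := ∑' n : ℕ, (Λ (n + 1) : ℝ) / ((n : ℝ) + 1) ^ u with hAdef
  set Z := ∑' n : ℕ, (1:ℝ) / ((n : ℝ) + 1) ^ u with hZdef
  set D := ∑' n : ℕ, Real.log ((n : ℝ) + 1) / ((n : ℝ) + 1) ^ u with hDdef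
  -- hreal : D = A * Z
  have hmid : A * (1 / (u - 1)) ≤ D := by
    calc A * (1 / (u - 1)) ≤ A * Z := mul_le_mul_of_nonneg_left hZlow hA0
      _ = D := hreal.symm
  have e1 : (u + 1) / 2 - 1 = (u - 1) / 2 := by ring
  rw [e1, one_div_div] at hDhigh
  have hkey : A ≤ 2 * (1 + 2 / (u - 1)) := by
    have h7 := hmid.trans hDhigh
    calc A = A * (1 / (u - 1)) * (u - 1) := by field_simp
      _ ≤ 2 / (u - 1) * (1 + 2 / (u - 1)) * (u - 1) := mul_le_mul_of_nonneg_right h7 hδ.le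
      _ = 2 * (1 + 2 / (u - 1)) := by field_simp
  have h8 : 2 * (1 + 2 / (u - 1)) = (2 * (u - 1) + 4) / (u - 1) := by field_simp; ring
  have h9 : (2 * (u - 1) + 4) / (u - 1) ≤ 12 / (u - 1) := by
    gcongr
    linarith
  calc A ≤ 2 * (1 + 2 / (u - 1)) := hkey
    _ = (2 * (u - 1) + 4) / (u - 1) := h8
    _ ≤ 12 / (u - 1) := h9

end NegReZetaAux



/-- There is an absolute constant `b > 0` such that for all sufficiently large `t` and every
real `1 ≤ K ≤ log log t`, with `σ₀ = 1 + K/((log t)^{2/3}(log log t)^{1/3})` one has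
`−Re(ζ'(σ₀+it)/ζ(σ₀+it)) ≤ b (log log t)^{1/3} (log t)^{2/3}`. -/
theorem neg_re_logDeriv_zeta_bound :
    ∃ b > (0 : ℝ), ∃ t₀ : ℝ, ∀ t ≥ t₀, ∀ K : ℝ, 1 ≤ K → K ≤ Real.log (Real.log t) →
      ∀ σ₀ : ℝ,
        σ₀ = 1 + K / ((Real.log t) ^ ((2 : ℝ)/3) * (Real.log (Real.log t)) ^ ((1 : ℝ)/3)) →
        -((deriv riemannZeta (σ₀ + t * Complex.I) / riemannZeta (σ₀ + t * Complex.I)).re)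
          ≤ b * (Real.log (Real.log t)) ^ ((1 : ℝ)/3) * (Real.log t) ^ ((2 : ℝ)/3) := by
  refine ⟨12, by norm_num, Real.exp 40, fun t ht K hK1 hK2 v hv ↦ ?_⟩
  set lg := Real.log t with hLdef
  set lgg := Real.log lg with hLLdef
  have hL40 : (40 : ℝ) ≤ lg := by
    rw [hLdef]
    calc (40 : ℝ) = Real.log (Real.exp 40) := (Real.log_exp 40).symm
      _ ≤ Real.log t := Real.log_le_log (Real.exp_pos 40) ht
  have hLpos : (0 : ℝ) < lg := by linarith
  have hLL1 : (1 : ℝ) ≤ lgg := le_trans hK1 hK2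
  have hLLpos : (0 : ℝ) < lgg := by linarith
  -- log lg ≤ lg / 3
  have hLL_le : lgg ≤ lg / 3 := by
    have hsq : (6 : ℝ) ≤ Real.sqrt lg := by
      rw [show (6:ℝ) = Real.sqrt 36 by rw [show (36:ℝ) = 6^2 by norm_num, Real.sqrt_sq]; norm_num]
      exact Real.sqrt_le_sqrt (by linarith)
    have hsqpos : (0 : ℝ) < Real.sqrt lg := by linarith
    have hlogsqrt : Real.log (Real.sqrt lg) ≤ Real.sqrt lg - 1 :=
      Real.log_le_sub_one_of_pos hsqpos
    have hmul : Real.sqrt lg * Real.sqrt lg = lg := Real.mul_self_sqrt hLpos.le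
    have h6 : Real.sqrt lg ≤ lg / 6 := by nlinarith
    have hls : Real.log (Real.sqrt lg) = lgg / 2 := by
      rw [Real.log_sqrt hLpos.le]
    nlinarith
  set X := lg ^ ((2 : ℝ)/3) * lgg ^ ((1 : ℝ)/3) with hXdef
  have hL23pos : (0:ℝ) < lg ^ ((2:ℝ)/3) := Real.rpow_pos_of_pos hLpos _
  have hLL13pos : (0:ℝ) < lgg ^ ((1:ℝ)/3) := Real.rpow_pos_of_pos hLLpos _
  have hXpos : (0 : ℝ) < X := mul_pos hL23pos hLL13pos
  -- 2 * lgg ≤ X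
  have h2LL : 2 * lgg ≤ X := by
    have hLLsplit : lgg = lgg ^ ((2:ℝ)/3) * lgg ^ ((1:ℝ)/3) := by
      rw [← Real.rpow_add hLLpos]; norm_num
    have hmono : lgg ^ ((2:ℝ)/3) ≤ (lg / 3) ^ ((2:ℝ)/3) :=
      Real.rpow_le_rpow hLLpos.le hLL_le (by norm_num)
    have hsplit3 : (lg / 3) ^ ((2:ℝ)/3) = ((1:ℝ)/3) ^ ((2:ℝ)/3) * lg ^ ((2:ℝ)/3) := by
      rw [show lg / 3 = (1/3) * lg by ring, Real.mul_rpow (by norm_num) hLpos.le]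
    have hc : ((1:ℝ)/3) ^ ((2:ℝ)/3) ≤ 1 / 2 := by
      have h30 : (0:ℝ) ≤ ((1:ℝ)/3) ^ ((2:ℝ)/3) := Real.rpow_nonneg (by norm_num) _
      have hx3 : (((1:ℝ)/3) ^ ((2:ℝ)/3)) ^ (3 : ℕ) = (1:ℝ)/9 := by
        rw [← Real.rpow_natCast (((1:ℝ)/3) ^ ((2:ℝ)/3)) 3, ← Real.rpow_mul (by norm_num)]
        norm_num
      by_contra hcon
      push_neg at hcon
      have h3 : ((1:ℝ)/2) ^ (3:ℕ) < (((1:ℝ)/3) ^ ((2:ℝ)/3)) ^ (3:ℕ) :=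
        pow_lt_pow_left₀ hcon (by norm_num) (by norm_num)
      rw [hx3] at h3
      norm_num at h3
    have hfin : lgg ^ ((2:ℝ)/3) ≤ (1/2) * lg ^ ((2:ℝ)/3) := by
      calc lgg ^ ((2:ℝ)/3) ≤ ((1:ℝ)/3) ^ ((2:ℝ)/3) * lg ^ ((2:ℝ)/3) := by
            rw [← hsplit3]; exact hmono
        _ ≤ (1/2) * lg ^ ((2:ℝ)/3) := by nlinarith
    calc 2 * lgg = 2 * (lgg ^ ((2:ℝ)/3) * lgg ^ ((1:ℝ)/3)) := by rw [← hLLsplit]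
      _ ≤ 2 * ((1/2) * lg ^ ((2:ℝ)/3) * lgg ^ ((1:ℝ)/3)) := by nlinarith
      _ = X := by rw [hXdef]; ring
  have hδpos : (0 : ℝ) < K / X := div_pos (by linarith) hXpos
  have hδhalf : K / X ≤ 1 / 2 := by
    rw [div_le_iff₀ hXpos]
    nlinarith
  have h1 : 1 < v := by rw [hv]; linarith
  have h2 : v ≤ 3 / 2 := by rw [hv]; linarith
  -- the complex point
  set s : ℂ := (v : ℂ) + (t : ℂ) * Complex.I with hsdef
  have hsre : s.re = v := by simp [hsdef]
  have hsre1 : 1 < s.re := by rw [hsre]; exact h1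
  have hzeta := ArithmeticFunction.LSeries_vonMangoldt_eq_deriv_riemannZeta_div hsre1
  have hstep : -((deriv riemannZeta s / riemannZeta s).re)
      = (LSeries (fun n ↦ ((Λ n : ℝ) : ℂ)) s).re := by
    rw [hzeta, neg_div, neg_re]
  -- summability of norms
  have hg : ∀ n : ℕ, ‖LSeries.term (fun n ↦ ((Λ n : ℝ) : ℂ)) s n‖
      = (if n = 0 then (0:ℝ) else (Λ n : ℝ) / (n : ℝ) ^ v) := by
    intro n
    rw [LSeries.norm_term_eq, hsre]
    rcases eq_or_ne n 0 with rfl | hn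
    · simp
    · rw [if_neg hn, if_neg hn, Complex.norm_real, Real.norm_eq_abs,
        _root_.abs_of_nonneg ArithmeticFunction.vonMangoldt_nonneg]
  have hgs1 : Summable (fun n : ℕ ↦ (Λ (n + 1) : ℝ) / ((n : ℝ) + 1) ^ v) := by
    refine Summable.of_nonneg_of_le (fun n ↦ ?_) (fun n ↦ ?_) (NegReZetaAux.summable_D h1)
    · have := ArithmeticFunction.vonMangoldt_nonneg (n := n + 1)
      positivity
    · have hle : (Λ (n + 1) : ℝ) ≤ Real.log ((n : ℝ) + 1) := by
        have := ArithmeticFunction.vonMangoldt_le_log (n := n + 1)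
        push_cast at this ⊢
        convert this using 2 <;> push_cast <;> ring
      have hpow : (0:ℝ) < ((n : ℝ) + 1) ^ v := by positivity
      exact div_le_div_of_nonneg_right hle hpow.le
  have hgs : Summable (fun n : ℕ ↦ if n = 0 then (0:ℝ) else (Λ n : ℝ) / (n : ℝ) ^ v) := by
    refine (summable_nat_add_iff 1).mp ?_
    refine hgs1.congr fun n ↦ ?_
    rw [if_neg (Nat.succ_ne_zero n)]
    push_cast
    ring_nf
  have hsummnorm : Summable fun n ↦ ‖LSeries.term (fun n ↦ ((Λ n : ℝ) : ℂ)) s n‖ := by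
    refine hgs.congr fun n ↦ (hg n).symm
  -- the chain of inequalities
  have hnorm : (LSeries (fun n ↦ ((Λ n : ℝ) : ℂ)) s).re
      ≤ ∑' n : ℕ, (Λ (n + 1) : ℝ) / ((n : ℝ) + 1) ^ v := by
    calc (LSeries (fun n ↦ ((Λ n : ℝ) : ℂ)) s).re
        ≤ ‖LSeries (fun n ↦ ((Λ n : ℝ) : ℂ)) s‖ := Complex.re_le_norm _
      _ ≤ ∑' n : ℕ, ‖LSeries.term (fun n ↦ ((Λ n : ℝ) : ℂ)) s n‖ :=
          norm_tsum_le_tsum_norm hsummnorm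
      _ = ∑' n : ℕ, (if n = 0 then (0:ℝ) else (Λ n : ℝ) / (n : ℝ) ^ v) := tsum_congr hg
      _ = ∑' n : ℕ, (Λ (n + 1) : ℝ) / ((n : ℝ) + 1) ^ v := by
          rw [Summable.tsum_eq_zero_add hgs, if_pos rfl, zero_add]
          refine tsum_congr fun n ↦ ?_
          rw [if_neg (Nat.succ_ne_zero n)]
          push_cast
          ring_nf
  have hAle := NegReZetaAux.A_le h1 h2
  have hvsub : v - 1 = K / X := by rw [hv]; ring
  have hlast : (12 : ℝ) / (v - 1) ≤ 12 * lgg ^ ((1:ℝ)/3) * lg ^ ((2:ℝ)/3) := by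
    rw [hvsub, div_div_eq_mul_div]
    calc 12 * X / K ≤ 12 * X / 1 := by
          apply div_le_div_of_nonneg_left (by positivity) one_pos hK1
      _ = 12 * X := by rw [div_one]
      _ = 12 * lgg ^ ((1:ℝ)/3) * lg ^ ((2:ℝ)/3) := by rw [hXdef]; ring
  calc -((deriv riemannZeta s / riemannZeta s).re)
      = (LSeries (fun n ↦ ((Λ n : ℝ) : ℂ)) s).re := hstep
    _ ≤ ∑' n : ℕ, (Λ (n + 1) : ℝ) / ((n : ℝ) + 1) ^ v := hnorm
    _ ≤ 12 / (v - 1) := hAle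
    _ ≤ 12 * lgg ^ ((1:ℝ)/3) * lg ^ ((2:ℝ)/3) := hlast
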